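/- arXiv:2212.13140 — 4 statements merged into one kernel-verified Lean document; each statement's English description precedes it below -/
import Mathlib

section
/- Let a > 0, γ > 1, and α ∈ (0,1) be real numbers, and let H(ρ,r) = P(ρ) − P′(r)(ρ − r) − P(r) with P(ρ) = a(ρ^γ − ρ)/(γ − 1). Then there exists a constant c > 0, depending only on a, γ and α, such that H(ρ, r) ≥ c (1 + ρ^γ) for all r with α ≤ r ≤ α^{-1} and all ρ ≥ 0 lying outside the interval [α/2, 2/α]. -/
/-- Tangent line inequality for `x ↦ x ^ γ` (real power, `γ ≥ 1`): the function lies above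
its tangent line at any `y > 0`, for all `x ≥ 0`. -/
lemma rpow_tangent_le {γ : ℝ} (hγ : 1 ≤ γ) {x y : ℝ} (hx : 0 ≤ x) (hy : 0 < y) :
    y ^ γ + γ * y ^ (γ - 1) * (x - y) ≤ x ^ γ := by
  have hs : (-1:ℝ) ≤ (x - y) / y := by
    rw [le_div_iff₀ hy]; linarith
  have hB := one_add_mul_self_le_rpow_one_add hs hγ
  have h1 : (1 + (x - y) / y) = x / y := by field_simp; ring
  rw [h1, Real.div_rpow hx hy.le γ] at hB
  have hyγ : (0:ℝ) < y ^ γ := Real.rpow_pos_of_pos hy γ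
  have hy1 : y ^ (γ - 1) * y = y ^ γ := by
    rw [← Real.rpow_add_one hy.ne' (γ - 1)]; ring_nf
  have h3 : y ^ (γ - 1) = y ^ γ / y := by
    field_simp [← hy1]; exact hy1
  have hmul := mul_le_mul_of_nonneg_left hB hyγ.le
  rw [mul_div_cancel₀ _ hyγ.ne'] at hmul
  calc y ^ γ + γ * y ^ (γ - 1) * (x - y)
      = y ^ γ * (1 + γ * ((x - y) / y)) := by rw [h3]; field_simp
    _ ≤ x ^ γ := hmul

set_option maxHeartbeats 1000000 in
/-- With `P(ρ) = a(ρ^γ − ρ)/(γ − 1)` (`a > 0`, `γ > 1`) and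
`H(ρ,r) = P(ρ) − P′(r)(ρ − r) − P(r)`, for every `α ∈ (0,1)` there is a constant `c > 0`
(depending only on `a`, `γ`, `α`) such that `H(ρ,r) ≥ c(1 + ρ^γ)` whenever
`α ≤ r ≤ α⁻¹` and `ρ ≥ 0` lies outside the interval `[α/2, 2/α]`. -/
theorem relative_energy_growth_lower_bound (a γ α : ℝ) (ha : 0 < a) (hγ : 1 < γ)
    (hα : α ∈ Set.Ioo (0:ℝ) 1)
    (P : ℝ → ℝ) (hP : P = fun ρ : ℝ => a * (ρ ^ γ - ρ) / (γ - 1))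
    (H : ℝ → ℝ → ℝ)
    (hH : H = fun ρ r : ℝ => P ρ - deriv P r * (ρ - r) - P r) :
    ∃ c : ℝ, 0 < c ∧ ∀ ρ r : ℝ, r ∈ Set.Icc α α⁻¹ → 0 ≤ ρ →
      ρ ∉ Set.Icc (α / 2) (2 / α) →
      c * (1 + ρ ^ γ) ≤ H ρ r := by
  obtain ⟨hα0, hα1⟩ := hα
  have hγ0 : (0:ℝ) < γ - 1 := by linarith
  have hγne : γ - 1 ≠ 0 := hγ0.ne'
  have haγ : 0 < a / (γ - 1) := div_pos ha hγ0
  have h2γpos : (0:ℝ) < (2:ℝ) ^ γ := Real.rpow_pos_of_pos two_pos γ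
  have h2exp : (2:ℝ) ^ γ = 2 * Real.exp ((γ - 1) * Real.log 2) := by
    rw [Real.rpow_def_of_pos two_pos]
    rw [show Real.log 2 * γ = (γ - 1) * Real.log 2 + Real.log 2 by ring, Real.exp_add,
      Real.exp_log two_pos]
    ring
  have hlog2lt : Real.log 2 < 0.6931471808 := Real.log_two_lt_d9
  have hlog2gt : (0.6931471803:ℝ) < Real.log 2 := Real.log_two_gt_d9
  -- 2^γ > 1 + γ
  have h2γ_big : 1 + γ < (2:ℝ) ^ γ := by
    have he := Real.add_one_le_exp ((γ - 1) * Real.log 2)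
    rw [h2exp]; nlinarith
  have h2negγ : (2:ℝ) ^ (-γ) = ((2:ℝ) ^ γ)⁻¹ := Real.rpow_neg (by norm_num) γ
  have hsmallc : 0 < (2:ℝ) ^ (-γ) + γ / 2 - 1 := by
    have he := Real.add_one_le_exp (-((γ - 1) * Real.log 2))
    have h2neg : (2:ℝ) ^ (-γ) = Real.exp (-((γ - 1) * Real.log 2)) / 2 := by
      rw [h2negγ, h2exp, mul_inv, Real.exp_neg]; ring
    rw [h2neg]
    nlinarith
  set c₁ : ℝ := (1 - (1 + γ) * (2:ℝ) ^ (-γ)) / 2 with hc₁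
  set c₂ : ℝ := α ^ γ * ((2:ℝ) ^ (-γ) + γ / 2 - 1) / 2 with hc₂
  have hαγpos : 0 < α ^ γ := Real.rpow_pos_of_pos hα0 γ
  have hc₁pos : 0 < c₁ := by
    have : (1 + γ) * (2:ℝ) ^ (-γ) < 1 := by
      rw [h2negγ, mul_inv_lt_iff₀ h2γpos]
      linarith
    rw [hc₁]; linarith
  have hc₂pos : 0 < c₂ := by
    have := mul_pos hαγpos hsmallc
    rw [hc₂]; linarith
  refine ⟨a / (γ - 1) * min c₁ c₂, mul_pos haγ (lt_min hc₁pos hc₂pos), ?_⟩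
  intro ρ r hr hρ0 hρout
  obtain ⟨hrα, hrαinv⟩ := hr
  have hr0 : 0 < r := lt_of_lt_of_le hα0 hrα
  have hrr : r ^ (γ - 1) * r = r ^ γ := by
    rw [← Real.rpow_add_one hr0.ne' (γ - 1)]; ring_nf
  -- key formula for H
  have hkey : H ρ r = a / (γ - 1) * (ρ ^ γ - γ * r ^ (γ - 1) * ρ + (γ - 1) * r ^ γ) := by
    have hder : HasDerivAt P (a * (γ * r ^ (γ - 1) - 1) / (γ - 1)) r := by
      rw [hP]
      have h1 : HasDerivAt (fun x : ℝ => x ^ γ) (γ * r ^ (γ - 1)) r :=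
        Real.hasDerivAt_rpow_const (Or.inl hr0.ne')
      have h2 := ((h1.sub (hasDerivAt_id r)).const_mul a).div_const (γ - 1)
      convert h2 using 1
      try ring
      all_goals rfl
    have hd : deriv (fun ρ : ℝ => a * (ρ ^ γ - ρ) / (γ - 1)) r
        = a * (γ * r ^ (γ - 1) - 1) / (γ - 1) := by
      rw [← hP]; exact hder.deriv
    simp only [hH, hP]
    rw [hd]
    field_simp
    linear_combination γ * hrr
  rw [hkey]
  rw [Set.mem_Icc, not_and_or, not_le, not_le] at hρout
  have hrγ1pos : 0 < r ^ (γ - 1) := Real.rpow_pos_of_pos hr0 (γ - 1)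
  have hmono : ∀ x y : ℝ, 0 ≤ x → x ≤ y → x ^ (γ - 1) ≤ y ^ (γ - 1) :=
    fun x y hx hxy => Real.rpow_le_rpow hx hxy (by linarith)
  rcases hρout with hsmall | hlarge
  · -- ρ < α/2 : small case
    have hm0 : (0:ℝ) < α / 2 := by linarith
    have hs0 : (0:ℝ) < r / 2 := by linarith
    -- step A: ρ^γ - γ r^(γ-1) ρ ≥ (α/2)^γ - γ r^(γ-1) (α/2)
    have hA : (α/2) ^ γ - γ * r ^ (γ-1) * (α/2) ≤ ρ ^ γ - γ * r ^ (γ-1) * ρ := by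
      have ht := rpow_tangent_le hγ.le hρ0 hm0
      have hmr : (α/2) ^ (γ-1) ≤ r ^ (γ-1) := hmono _ _ hm0.le (by linarith)
      have hp := mul_le_mul_of_nonneg_right hmr (show (0:ℝ) ≤ (α/2) - ρ by linarith)
      have hp2 := mul_le_mul_of_nonneg_left hp (show (0:ℝ) ≤ γ by linarith)
      linarith [ht, hp2]
    -- step B: (α/2)^γ - γ r^(γ-1)(α/2) ≥ (r/2)^γ - γ r^(γ-1) (r/2)
    have hB : (r/2) ^ γ - γ * r ^ (γ-1) * (r/2) ≤ (α/2) ^ γ - γ * r ^ (γ-1) * (α/2) := by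
      have ht := rpow_tangent_le hγ.le hm0.le hs0
      have hsr : (r/2) ^ (γ-1) ≤ r ^ (γ-1) := hmono _ _ hs0.le (by linarith)
      have hp := mul_le_mul_of_nonneg_right hsr (show (0:ℝ) ≤ (r/2) - (α/2) by linarith)
      have hp2 := mul_le_mul_of_nonneg_left hp (show (0:ℝ) ≤ γ by linarith)
      linarith [ht, hp2]
    have hhalfγ : (r/2) ^ γ = (2:ℝ)^(-γ) * r ^ γ := by
      rw [Real.div_rpow hr0.le (by norm_num : (0:ℝ) ≤ 2) γ, h2negγ, div_eq_inv_mul]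
    have h5 : γ * r ^ (γ-1) * (r/2) = γ/2 * r ^ γ := by
      linear_combination (γ/2) * hrr
    have hrγα : α ^ γ ≤ r ^ γ := Real.rpow_le_rpow hα0.le hrα (by linarith)
    have hG : 2 * c₂ ≤ ρ ^ γ - γ * r ^ (γ-1) * ρ + (γ - 1) * r ^ γ := by
      have h1 : r ^ γ * ((2:ℝ)^(-γ) + γ/2 - 1) ≤
          ρ ^ γ - γ * r ^ (γ-1) * ρ + (γ - 1) * r ^ γ := by
        linarith [hA, hB, hhalfγ, h5]
      have h2 : α ^ γ * ((2:ℝ)^(-γ) + γ/2 - 1) ≤ r ^ γ * ((2:ℝ)^(-γ) + γ/2 - 1) :=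
        mul_le_mul_of_nonneg_right hrγα hsmallc.le
      rw [hc₂]; linarith
    have hργ1 : ρ ^ γ ≤ 1 := Real.rpow_le_one hρ0 (by linarith) (by linarith)
    have hργ0 : 0 ≤ ρ ^ γ := Real.rpow_nonneg hρ0 γ
    have hminc₂ : min c₁ c₂ ≤ c₂ := min_le_right _ _
    have hminpos : 0 < min c₁ c₂ := lt_min hc₁pos hc₂pos
    have hfold : min c₁ c₂ * (1 + ρ ^ γ) ≤ c₂ * 2 :=
      mul_le_mul hminc₂ (by linarith) (by linarith) hc₂pos.le
    calc a / (γ-1) * min c₁ c₂ * (1 + ρ ^ γ)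
        = a / (γ-1) * (min c₁ c₂ * (1 + ρ ^ γ)) := by ring
      _ ≤ a / (γ-1) * (2 * c₂) := by
          apply mul_le_mul_of_nonneg_left _ haγ.le
          linarith
      _ ≤ a / (γ-1) * (ρ ^ γ - γ * r ^ (γ-1) * ρ + (γ - 1) * r ^ γ) :=
          mul_le_mul_of_nonneg_left hG haγ.le
  · -- 2/α < ρ : large case
    have hρ2 : (2:ℝ) < ρ := by
      have : (2:ℝ) < 2 / α := by
        rw [lt_div_iff₀ hα0]; nlinarith
      linarith
    have hρpos : (0:ℝ) < ρ := by linarith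
    have hs0 : (0:ℝ) < ρ / 2 := by linarith
    have hrs : r ≤ ρ / 2 := by
      have h2 : 2 / α ≤ ρ := hlarge.le
      rw [div_le_iff₀ hα0] at h2
      have h3 : α⁻¹ ≤ ρ / 2 := by
        rw [inv_eq_one_div, div_le_div_iff₀ hα0 (by norm_num : (0:ℝ) < 2)]
        nlinarith
      linarith
    have ht : r ^ γ + γ * r ^ (γ-1) * (ρ/2 - r) ≤ (ρ/2) ^ γ :=
      rpow_tangent_le hγ.le hs0.le hr0
    have hrsγ : r ^ (γ-1) ≤ (ρ/2) ^ (γ-1) := hmono _ _ hr0.le hrs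
    have hss : (ρ/2) ^ (γ - 1) * (ρ/2) = (ρ/2) ^ γ := by
      rw [← Real.rpow_add_one hs0.ne' (γ - 1)]; ring_nf
    have hhalfγ : (ρ/2) ^ γ = (2:ℝ)^(-γ) * ρ ^ γ := by
      rw [Real.div_rpow hρpos.le (by norm_num : (0:ℝ) ≤ 2) γ, h2negγ, div_eq_inv_mul]
    have hργpos : 0 < ρ ^ γ := Real.rpow_pos_of_pos hρpos γ
    have hstep : γ * r ^ (γ-1) * (ρ/2) ≤ γ * (ρ/2) ^ (γ-1) * (ρ/2) :=
      mul_le_mul_of_nonneg_right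
        (mul_le_mul_of_nonneg_left hrsγ (by linarith)) hs0.le
    have hss2 : γ * (ρ/2) ^ (γ-1) * (ρ/2) = γ * ((2:ℝ)^(-γ) * ρ ^ γ) := by
      rw [← hhalfγ]; linear_combination γ * hss
    have hrrγ : γ * r ^ (γ-1) * r = γ * r ^ γ := by
      linear_combination γ * hrr
    have hG : 2 * c₁ * ρ ^ γ ≤ ρ ^ γ - γ * r ^ (γ-1) * ρ + (γ - 1) * r ^ γ := by
      have h1 : r ^ γ + γ * r ^ (γ-1) * (ρ - r) ≤ (1 + γ) * ((2:ℝ)^(-γ) * ρ ^ γ) := by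
        linarith [ht, hstep, hss2, hhalfγ]
      rw [hc₁]
      linarith [h1, hrrγ]
    have hργ1 : (1:ℝ) ≤ ρ ^ γ := Real.one_le_rpow (by linarith) (by linarith)
    have hminc₁ : min c₁ c₂ ≤ c₁ := min_le_left _ _
    have hminpos : 0 < min c₁ c₂ := lt_min hc₁pos hc₂pos
    have hfold : min c₁ c₂ * (1 + ρ ^ γ) ≤ c₁ * (2 * ρ ^ γ) :=
      mul_le_mul hminc₁ (by linarith) (by linarith) hc₁pos.le
    calc a / (γ-1) * min c₁ c₂ * (1 + ρ ^ γ)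
        = a / (γ-1) * (min c₁ c₂ * (1 + ρ ^ γ)) := by ring
      _ ≤ a / (γ-1) * (2 * c₁ * ρ ^ γ) := by
          apply mul_le_mul_of_nonneg_left _ haγ.le
          linarith
      _ ≤ a / (γ-1) * (ρ ^ γ - γ * r ^ (γ-1) * ρ + (γ - 1) * r ^ γ) :=
          mul_le_mul_of_nonneg_left hG haγ.le
end

section
/- Let a > 0 and γ > 1 be real numbers and let H(ρ,1) = P(ρ) − P′(1)(ρ − 1) − P(1) with P(ρ) = a(ρ^γ − ρ)/(γ − 1). Then there exists a constant c > 0, depending only on a and γ, such that for every ρ ≥ 0: if |ρ − 1| ≤ 1/2 then (ρ − 1)² ≤ c · H(ρ, 1), and if |ρ − 1| > 1/2 then |ρ − 1|^γ ≤ c · H(ρ, 1). -/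
set_option maxHeartbeats 1000000 in
/-- With `P(ρ) = a(ρ^γ − ρ)/(γ − 1)` (`a > 0`, `γ > 1`) and
`H(ρ,1) = P(ρ) − P′(1)(ρ − 1) − P(1)`, there is a constant `c > 0` (depending only on
`a` and `γ`) such that for every `ρ ≥ 0`: if `|ρ − 1| ≤ 1/2` then `(ρ − 1)² ≤ c H(ρ,1)`,
and if `|ρ − 1| > 1/2` then `|ρ − 1|^γ ≤ c H(ρ,1)`. -/
theorem relative_energy_lower_bound_at_one (a γ : ℝ) (ha : 0 < a) (hγ : 1 < γ)
    (P : ℝ → ℝ) (hP : P = fun ρ : ℝ => a * (ρ ^ γ - ρ) / (γ - 1))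
    (H : ℝ → ℝ → ℝ)
    (hH : H = fun ρ r : ℝ => P ρ - deriv P r * (ρ - r) - P r) :
    ∃ c : ℝ, 0 < c ∧ ∀ ρ : ℝ, 0 ≤ ρ →
      (|ρ - 1| ≤ 1 / 2 → (ρ - 1) ^ 2 ≤ c * H ρ 1) ∧
      (1 / 2 < |ρ - 1| → |ρ - 1| ^ γ ≤ c * H ρ 1) := by
  have hγ0 : (0:ℝ) < γ := by linarith
  have hγ1 : (0:ℝ) < γ - 1 := by linarith
  set f : ℝ → ℝ := fun x => x ^ γ - 1 - γ * (x - 1) with hfdef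
  -- derivative of f
  have hfd : ∀ x : ℝ, HasDerivAt f (γ * x ^ (γ - 1) - γ) x := by
    intro x
    have h1 : HasDerivAt (fun y : ℝ => y ^ γ) (γ * x ^ (γ - 1)) x :=
      Real.hasDerivAt_rpow_const (Or.inr hγ.le)
    have h2 := (h1.sub (hasDerivAt_const x 1)).sub
      (((hasDerivAt_id x).sub (hasDerivAt_const x 1)).const_mul γ)
    exact h2.congr_deriv (by ring)
  -- f nonneg on [0,∞)  (Bernoulli)
  have hfnn : ∀ x : ℝ, 0 ≤ x → 0 ≤ f x := by
    intro x hx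
    have h := one_add_mul_self_le_rpow_one_add (s := x - 1) (by linarith) hγ.le
    have he : (1 + (x - 1) : ℝ) = x := by ring
    rw [he] at h
    simp only [hfdef]
    linarith
  have hf1 : f 1 = 0 := by simp [hfdef, Real.one_rpow]
  ----------------------------------------------------------------
  -- CASE 1 machinery : m
  set m : ℝ := γ * (γ - 1) * min ((1/2 : ℝ) ^ (γ - 2)) ((3/2 : ℝ) ^ (γ - 2)) with hmdef
  have hminpos : 0 < min ((1/2:ℝ) ^ (γ - 2)) ((3/2:ℝ) ^ (γ - 2)) :=
    lt_min (Real.rpow_pos_of_pos (by norm_num) _) (Real.rpow_pos_of_pos (by norm_num) _)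
  have hm : 0 < m := mul_pos (mul_pos hγ0 hγ1) hminpos
  have hxlb : ∀ x ∈ Set.Icc (1/2:ℝ) (3/2),
      min ((1/2:ℝ) ^ (γ - 2)) ((3/2:ℝ) ^ (γ - 2)) ≤ x ^ (γ - 2) := by
    intro x hx
    rcases le_or_gt 0 (γ - 2) with h | h
    · exact le_trans (min_le_left _ _) (Real.rpow_le_rpow (by norm_num) hx.1 h)
    · exact le_trans (min_le_right _ _)
        (Real.rpow_le_rpow_of_nonpos (lt_of_lt_of_le (by norm_num) hx.1) hx.2 h.le)
  set g' : ℝ → ℝ := fun x => γ * x ^ (γ - 1) - γ - m * (x - 1) with hg'def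
  have hg'd : ∀ x : ℝ, x ≠ 0 → HasDerivAt g' (γ * (γ - 1) * x ^ (γ - 2) - m) x := by
    intro x hx
    have h1 : HasDerivAt (fun y : ℝ => y ^ (γ - 1)) ((γ - 1) * x ^ (γ - 1 - 1)) x :=
      Real.hasDerivAt_rpow_const (Or.inl hx)
    have h2 := ((h1.const_mul γ).sub (hasDerivAt_const x γ)).sub
      (((hasDerivAt_id x).sub (hasDerivAt_const x 1)).const_mul m)
    have he : γ - 1 - 1 = γ - 2 := by ring
    rw [he] at h2
    exact h2.congr_deriv (by ring)
  have hg'mono : MonotoneOn g' (Set.Icc (1/2:ℝ) (3/2)) := by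
    apply monotoneOn_of_deriv_nonneg (convex_Icc _ _)
    · intro x hx
      exact (hg'd x (by intro h; rw [h] at hx; exact absurd hx.1 (by norm_num))).continuousAt.continuousWithinAt
    · rw [interior_Icc]
      intro x hx
      exact (hg'd x (by linarith [hx.1] : x ≠ 0)).differentiableAt.differentiableWithinAt
    · rw [interior_Icc]
      intro x hx
      have hx0 : x ≠ 0 := by intro h; rw [h] at hx; exact absurd hx.1 (by norm_num)
      rw [(hg'd x hx0).deriv]
      have hb := hxlb x (Set.Ioo_subset_Icc_self hx)
      have := mul_le_mul_of_nonneg_left hb (le_of_lt (mul_pos hγ0 hγ1))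
      simp only [hmdef]
      linarith
  have hg'1 : g' 1 = 0 := by simp [hg'def, Real.one_rpow]
  set g : ℝ → ℝ := fun x => f x - m/2 * (x - 1)^2 with hgdef
  have hgd : ∀ x : ℝ, HasDerivAt g (g' x) x := by
    intro x
    have h2 : HasDerivAt (fun y : ℝ => (y - 1)^2) (2 * (x - 1)) x := by
      have h := ((hasDerivAt_id x).sub (hasDerivAt_const x 1)).pow 2
      exact h.congr_deriv (by simp)
    have h3 := (hfd x).sub (h2.const_mul (m/2))
    exact h3.congr_deriv (by simp only [hg'def]; ring)
  have hg1 : g 1 = 0 := by simp [hgdef, hf1]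
  have key1 : ∀ ρ ∈ Set.Icc (1/2:ℝ) (3/2), m/2 * (ρ - 1)^2 ≤ f ρ := by
    intro ρ hρ
    have hsub1 : Set.Icc (1/2:ℝ) 1 ⊆ Set.Icc (1/2:ℝ) (3/2) :=
      Set.Icc_subset_Icc le_rfl (by norm_num)
    have hsub2 : Set.Icc (1:ℝ) (3/2) ⊆ Set.Icc (1/2:ℝ) (3/2) :=
      Set.Icc_subset_Icc (by norm_num) le_rfl
    have hgρ : 0 ≤ g ρ := by
      rcases le_total ρ 1 with h | h
      · have hanti : AntitoneOn g (Set.Icc (1/2:ℝ) 1) := by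
          apply antitoneOn_of_deriv_nonpos (convex_Icc _ _)
          · exact fun x _ => (hgd x).continuousAt.continuousWithinAt
          · rw [interior_Icc]
            exact fun x _ => (hgd x).differentiableAt.differentiableWithinAt
          · rw [interior_Icc]
            intro x hx
            rw [(hgd x).deriv]
            have := hg'mono (hsub1 (Set.Ioo_subset_Icc_self hx))
              (⟨by norm_num, by norm_num⟩ : (1:ℝ) ∈ Set.Icc (1/2:ℝ) (3/2)) hx.2.le
            linarith [hg'1]
        have := hanti ⟨hρ.1, h⟩ (⟨by norm_num, le_refl 1⟩ : (1:ℝ) ∈ Set.Icc (1/2:ℝ) 1) h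
        linarith [hg1]
      · have hmono : MonotoneOn g (Set.Icc (1:ℝ) (3/2)) := by
          apply monotoneOn_of_deriv_nonneg (convex_Icc _ _)
          · exact fun x _ => (hgd x).continuousAt.continuousWithinAt
          · rw [interior_Icc]
            exact fun x _ => (hgd x).differentiableAt.differentiableWithinAt
          · rw [interior_Icc]
            intro x hx
            rw [(hgd x).deriv]
            have := hg'mono (⟨by norm_num, by norm_num⟩ : (1:ℝ) ∈ Set.Icc (1/2:ℝ) (3/2))
              (hsub2 (Set.Ioo_subset_Icc_self hx)) hx.1.le
            linarith [hg'1]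
        have := hmono (⟨le_refl 1, by norm_num⟩ : (1:ℝ) ∈ Set.Icc (1:ℝ) (3/2)) ⟨h, hρ.2⟩ h
        linarith [hg1]
    simp only [hgdef] at hgρ
    linarith
  ----------------------------------------------------------------
  -- CASE 2a machinery : f antitone on [0,1], f(1/2) > 0
  have hfanti : AntitoneOn f (Set.Icc (0:ℝ) 1) := by
    apply antitoneOn_of_deriv_nonpos (convex_Icc _ _)
    · exact fun x _ => (hfd x).continuousAt.continuousWithinAt
    · rw [interior_Icc]
      exact fun x _ => (hfd x).differentiableAt.differentiableWithinAt
    · rw [interior_Icc]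
      intro x hx
      rw [(hfd x).deriv]
      have h1 : x ^ (γ - 1) ≤ 1 := Real.rpow_le_one hx.1.le hx.2.le (by linarith)
      nlinarith
  have hfhalf : 0 < f (1/2) := by
    have h := one_add_mul_self_lt_rpow_one_add (s := (-(1/2):ℝ)) (by norm_num) (by norm_num) hγ
    have he : (1 + -(1/2) : ℝ) = 1/2 := by norm_num
    rw [he] at h
    simp only [hfdef]
    nlinarith
  ----------------------------------------------------------------
  -- CASE 2b machinery : ψ and c₀
  have hber : 1 + γ * (1/2) < (3/2:ℝ) ^ γ := by
    have h := one_add_mul_self_lt_rpow_one_add (s := (1/2:ℝ)) (by norm_num) (by norm_num) hγ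
    have he : (1 + 1/2 : ℝ) = 3/2 := by norm_num
    rw [he] at h
    exact h
  set A : ℝ := (1 + γ/2) * (2/3:ℝ) ^ γ with hAdef
  have hApos : 0 < A := mul_pos (by linarith) (Real.rpow_pos_of_pos (by norm_num) _)
  have h23 : ((2/3:ℝ)) ^ γ * ((3/2:ℝ)) ^ γ = 1 := by
    rw [← Real.mul_rpow (by norm_num) (by norm_num)]
    norm_num
  set c₀ : ℝ := 1 - A with hc₀def
  have hc₀ : 0 < c₀ := by
    have h2 : (0:ℝ) < (2/3:ℝ) ^ γ := Real.rpow_pos_of_pos (by norm_num) γ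
    have h3 := mul_lt_mul_of_pos_right hber h2
    simp only [hc₀def, hAdef]
    nlinarith [h23]
  set ψ : ℝ → ℝ := fun x => A * x ^ γ - 1 - γ * (x - 1) with hψdef
  have hψd : ∀ x : ℝ, HasDerivAt ψ (A * (γ * x ^ (γ - 1)) - γ) x := by
    intro x
    have h1 : HasDerivAt (fun y : ℝ => y ^ γ) (γ * x ^ (γ - 1)) x :=
      Real.hasDerivAt_rpow_const (Or.inr hγ.le)
    have h2 := ((h1.const_mul A).sub (hasDerivAt_const x 1)).sub
      (((hasDerivAt_id x).sub (hasDerivAt_const x 1)).const_mul γ)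
    exact h2.congr_deriv (by ring)
  have hψmono : MonotoneOn ψ (Set.Ici (3/2:ℝ)) := by
    apply monotoneOn_of_deriv_nonneg (convex_Ici _)
    · exact fun x _ => (hψd x).continuousAt.continuousWithinAt
    · rw [interior_Ici]
      exact fun x _ => (hψd x).differentiableAt.differentiableWithinAt
    · rw [interior_Ici]
      intro x hx
      rw [(hψd x).deriv]
      have h1 : ((3/2:ℝ)) ^ (γ - 1) ≤ x ^ (γ - 1) :=
        Real.rpow_le_rpow (by norm_num) (le_of_lt hx) (by linarith)
      have ht : (0:ℝ) < (2/3:ℝ) ^ (γ - 1) := Real.rpow_pos_of_pos (by norm_num) _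
      have h2 : ((2/3:ℝ)) ^ (γ - 1) * ((3/2:ℝ)) ^ (γ - 1) = 1 := by
        rw [← Real.mul_rpow (by norm_num) (by norm_num)]
        norm_num
      have h3 : ((2/3:ℝ)) ^ γ = (2/3) * ((2/3:ℝ)) ^ (γ - 1) := by
        have : γ = 1 + (γ - 1) := by ring
        rw [this, Real.rpow_add (by norm_num), Real.rpow_one]
        ring_nf
      have hts : 1 ≤ (2/3:ℝ) ^ (γ - 1) * x ^ (γ - 1) := by
        calc (1:ℝ) = (2/3:ℝ) ^ (γ - 1) * ((3/2:ℝ)) ^ (γ - 1) := h2.symm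
        _ ≤ (2/3:ℝ) ^ (γ - 1) * x ^ (γ - 1) := mul_le_mul_of_nonneg_left h1 ht.le
      have hA' : A = (1 + γ/2) * ((2/3) * ((2/3:ℝ)) ^ (γ - 1)) := by rw [hAdef, h3]
      rw [hA']
      nlinarith [mul_le_mul_of_nonneg_left hts
        (by positivity : (0:ℝ) ≤ γ * (1 + γ/2) * (2/3))]
  have hψ32 : ψ (3/2) = 0 := by
    simp only [hψdef, hAdef]
    have : (1 + γ/2) * (2/3:ℝ) ^ γ * (3/2:ℝ) ^ γ = 1 + γ/2 := by
      rw [mul_assoc, h23, mul_one]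
    nlinarith [this]
  have key2b : ∀ ρ : ℝ, 3/2 ≤ ρ → c₀ * ρ ^ γ ≤ f ρ := by
    intro ρ hρ
    have h0 := hψmono (Set.self_mem_Ici) (Set.mem_Ici.mpr hρ) hρ
    rw [hψ32] at h0
    simp only [hψdef] at h0
    simp only [hfdef, hc₀def]
    linarith
  ----------------------------------------------------------------
  -- H in terms of f
  have hP1 : deriv P 1 = a := by
    have h1 : HasDerivAt P (a * (γ * (1:ℝ) ^ (γ - 1) - 1) / (γ - 1)) 1 := by
      rw [hP]
      exact (((Real.hasDerivAt_rpow_const (Or.inr hγ.le)).sub (hasDerivAt_id 1)).const_mul a).div_const (γ - 1)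
    rw [h1.deriv, Real.one_rpow]
    field_simp
  have hHf : ∀ ρ : ℝ, H ρ 1 = a / (γ - 1) * f ρ := by
    intro ρ
    rw [hH]
    simp only [hP1]
    rw [hP]
    simp only [hfdef, Real.one_rpow]
    field_simp
    ring
  ----------------------------------------------------------------
  clear_value ψ c₀ A g g' m f
  obtain ⟨K, hK2m, hKfh, hKc₀, hK⟩ : ∃ K : ℝ, 2/m ≤ K ∧ 1/(f (1/2)) ≤ K ∧ 1/c₀ ≤ K ∧ 0 < K :=
    ⟨max (2/m) (max (1/(f (1/2))) (1/c₀)), le_max_left _ _,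
      le_trans (le_max_left _ _) (le_max_right _ _),
      le_trans (le_max_right _ _) (le_max_right _ _),
      lt_of_lt_of_le (by positivity) (le_max_left _ _)⟩
  refine ⟨(γ - 1)/a * K, by positivity, ?_⟩
  intro ρ hρ
  have hcH : (γ - 1)/a * K * H ρ 1 = K * f ρ := by
    rw [hHf]
    field_simp
  constructor
  · intro habs
    rw [hcH]
    obtain ⟨hl, hr⟩ := abs_le.mp habs
    have hmem : ρ ∈ Set.Icc (1/2:ℝ) (3/2) := Set.mem_Icc.mpr ⟨by linarith, by linarith⟩
    have h1 := key1 ρ hmem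
    have h2 : (ρ - 1)^2 ≤ 2/m * f ρ := by
      rw [div_mul_eq_mul_div, le_div_iff₀ hm]
      nlinarith
    have h3 : 2/m * f ρ ≤ K * f ρ :=
      mul_le_mul_of_nonneg_right hK2m (hfnn ρ hρ)
    exact h2.trans h3
  · intro habs
    rw [hcH]
    rcases le_total ρ 1 with h | h
    · have habs' : |ρ - 1| = 1 - ρ := by rw [abs_of_nonpos (by linarith)]; ring
      have hρhalf : ρ < 1/2 := by rw [habs'] at habs; linarith
      have hb1 : |ρ - 1| ^ γ ≤ 1 := by
        apply Real.rpow_le_one (abs_nonneg _) _ hγ0.le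
        rw [habs']; linarith
      have hb2 : f (1/2) ≤ f ρ :=
        hfanti (⟨hρ, by linarith⟩ : ρ ∈ Set.Icc (0:ℝ) 1)
          (⟨by norm_num, by norm_num⟩ : (1/2:ℝ) ∈ Set.Icc (0:ℝ) 1) hρhalf.le
      have hb3 : 1 ≤ 1/(f (1/2)) * f ρ := by
        rw [one_div, ← div_eq_inv_mul, le_div_iff₀ hfhalf]
        linarith
      have hb4 : 1/(f (1/2)) * f ρ ≤ K * f ρ :=
        mul_le_mul_of_nonneg_right hKfh (hfnn ρ hρ)
      exact hb1.trans (hb3.trans hb4)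
    · have habs' : |ρ - 1| = ρ - 1 := abs_of_nonneg (by linarith)
      have hρ32 : 3/2 < ρ := by rw [habs'] at habs; linarith
      have hb1 : |ρ - 1| ^ γ ≤ ρ ^ γ := by
        rw [habs']
        exact Real.rpow_le_rpow (by linarith) (by linarith) hγ0.le
      have hb2 := key2b ρ hρ32.le
      have hb3 : ρ ^ γ ≤ 1/c₀ * f ρ := by
        rw [one_div, ← div_eq_inv_mul, le_div_iff₀ hc₀]
        nlinarith
      have hb4 : 1/c₀ * f ρ ≤ K * f ρ :=
        mul_le_mul_of_nonneg_right hKc₀ (hfnn ρ hρ)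
      exact hb1.trans (hb3.trans hb4)
end

section
/- Let G : ℝ × ℝ^N → ℝ^N be continuously differentiable with G(0,0) = 0 and operator norm of the total derivative satisfying ‖DG(ρ,q)‖ ≤ α for every (ρ,q), where α ≥ 0. Then for every β ∈ (0,1) there exists a constant c > 0, depending only on α and β, such that for all ρ, r ∈ [β, 1/β] and all m, n ∈ ℝ^N: ρ · ‖G(ρ,m)/ρ − G(r,n)/r‖² ≤ c ( (ρ − r)² (1 + ‖n‖²) + ‖m − n‖² ). -/
set_option maxHeartbeats 1600000


/-- Let `G : ℝ × ℝ^N → ℝ^N` (Euclidean norm on `ℝ × ℝ^N`) be `C¹` with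
`G(0,0) = 0` and `‖DG‖ ≤ α` everywhere, `α ≥ 0`. Then for every `β ∈ (0,1)` there is a
constant `c > 0` (depending only on `α`, `β`) such that for all `ρ, r ∈ [β, 1/β]` and all
`m, n ∈ ℝ^N`: `ρ‖G(ρ,m)/ρ − G(r,n)/r‖² ≤ c((ρ − r)²(1 + ‖n‖²) + ‖m − n‖²)`. -/
theorem relative_noise_estimate (N : ℕ) (hN : 1 ≤ N) (α : ℝ) (hα : 0 ≤ α)
    (G : WithLp 2 (ℝ × EuclideanSpace ℝ (Fin N)) → EuclideanSpace ℝ (Fin N))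
    (hG : ContDiff ℝ 1 G) (hG0 : G 0 = 0)
    (hbound : ∀ x : WithLp 2 (ℝ × EuclideanSpace ℝ (Fin N)), ‖fderiv ℝ G x‖ ≤ α)
    (β : ℝ) (hβ : β ∈ Set.Ioo (0:ℝ) 1) :
    ∃ c : ℝ, 0 < c ∧ ∀ ρ r : ℝ, ρ ∈ Set.Icc β (1 / β) → r ∈ Set.Icc β (1 / β) →
      ∀ m n : EuclideanSpace ℝ (Fin N),
        ρ * ‖ρ⁻¹ • G ((WithLp.equiv 2 (ℝ × EuclideanSpace ℝ (Fin N))).symm (ρ, m))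
            - r⁻¹ • G ((WithLp.equiv 2 (ℝ × EuclideanSpace ℝ (Fin N))).symm (r, n))‖ ^ 2
          ≤ c * ((ρ - r) ^ 2 * (1 + ‖n‖ ^ 2) + ‖m - n‖ ^ 2) := by
  obtain ⟨hβ0, hβ1⟩ := hβ
  -- Lipschitz estimate
  have hlip : ∀ x y : WithLp 2 (ℝ × EuclideanSpace ℝ (Fin N)), ‖G x - G y‖ ≤ α * ‖x - y‖ := by
    intro x y
    exact (convex_univ).norm_image_sub_le_of_norm_fderiv_le
      (fun z _ => (hG.differentiable one_ne_zero).differentiableAt)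
      (fun z _ => hbound z) (Set.mem_univ y) (Set.mem_univ x)
  -- norm of an element of the L² product
  have hnorm : ∀ (a : ℝ) (b : EuclideanSpace ℝ (Fin N)),
      ‖(WithLp.equiv 2 (ℝ × EuclideanSpace ℝ (Fin N))).symm (a, b)‖ ≤ |a| + ‖b‖ := by
    intro a b
    have h1 : ‖(WithLp.equiv 2 (ℝ × EuclideanSpace ℝ (Fin N))).symm (a, b)‖ ^ 2
        = |a| ^ 2 + ‖b‖ ^ 2 := by
      rw [WithLp.prod_norm_sq_eq_of_L2]
      simp [Real.norm_eq_abs]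
    nlinarith [norm_nonneg ((WithLp.equiv 2 (ℝ × EuclideanSpace ℝ (Fin N))).symm (a, b)),
      abs_nonneg a, norm_nonneg b, sq_nonneg (|a| + ‖b‖)]
  set e := β⁻¹ with he
  have he1 : 1 ≤ e := (one_le_inv₀ hβ0).mpr (le_of_lt hβ1)
  refine ⟨12 * (α + 1) ^ 2 * e ^ 7 + 1, by positivity, ?_⟩
  rintro ρ r ⟨hρ1, hρ2⟩ ⟨hr1, hr2⟩ m n
  rw [one_div] at hρ2 hr2
  have hρ0 : 0 < ρ := lt_of_lt_of_le hβ0 hρ1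
  have hr0 : 0 < r := lt_of_lt_of_le hβ0 hr1
  set x := (WithLp.equiv 2 (ℝ × EuclideanSpace ℝ (Fin N))).symm (ρ, m) with hx
  set y := (WithLp.equiv 2 (ℝ × EuclideanSpace ℝ (Fin N))).symm (r, n) with hy
  -- bound on ‖G x - G y‖
  have hsub : x - y = (WithLp.equiv 2 (ℝ × EuclideanSpace ℝ (Fin N))).symm (ρ - r, m - n) := by
    rw [hx, hy, WithLp.equiv_symm_apply, ← WithLp.toLp_sub, Prod.mk_sub_mk]
  have h1 : ‖G x - G y‖ ≤ α * (|ρ - r| + ‖m - n‖) := by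
    calc ‖G x - G y‖ ≤ α * ‖x - y‖ := hlip x y
      _ ≤ α * (|ρ - r| + ‖m - n‖) := by
          apply mul_le_mul_of_nonneg_left _ hα
          rw [hsub]; exact hnorm _ _
  have h2 : ‖G y‖ ≤ α * (e + ‖n‖) := by
    have := hlip y 0
    rw [hG0, sub_zero, sub_zero] at this
    calc ‖G y‖ ≤ α * ‖y‖ := this
      _ ≤ α * (e + ‖n‖) := by
          apply mul_le_mul_of_nonneg_left _ hα
          refine le_trans (hnorm r n) ?_
          have : |r| ≤ e := by rw [abs_of_pos hr0]; exact hr2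
          linarith
  -- decompose the difference
  have hdecomp : ρ⁻¹ • G x - r⁻¹ • G y
      = ρ⁻¹ • (G x - G y) + (ρ⁻¹ - r⁻¹) • G y := by
    rw [smul_sub, sub_smul]; abel
  have hinv : |ρ⁻¹ - r⁻¹| ≤ e ^ 2 * |ρ - r| := by
    have hρr : β ^ 2 ≤ ρ * r := by nlinarith
    have : ρ⁻¹ - r⁻¹ = (r - ρ) / (ρ * r) := by field_simp
    rw [this, abs_div, abs_of_pos (by positivity : (0:ℝ) < ρ * r)]
    rw [div_le_iff₀ (by positivity)]
    have h3 : |r - ρ| = |ρ - r| := abs_sub_comm r ρ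
    rw [h3]
    have he2 : e ^ 2 * (ρ * r) ≥ 1 := by
      have : e ^ 2 * β ^ 2 = 1 := by
        rw [he]; field_simp
      nlinarith [abs_nonneg (ρ - r)]
    nlinarith [abs_nonneg (ρ - r)]
  -- main norm bound
  have hA : ‖ρ⁻¹ • G x - r⁻¹ • G y‖
      ≤ α * e * (|ρ - r| + ‖m - n‖) + e ^ 2 * |ρ - r| * (α * (e + ‖n‖)) := by
    rw [hdecomp]
    refine le_trans (norm_add_le _ _) ?_
    gcongr
    · rw [norm_smul, Real.norm_eq_abs, abs_of_pos (by positivity : (0:ℝ) < ρ⁻¹)]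
      have hρi : ρ⁻¹ ≤ e := by
        rw [he]; exact inv_anti₀ hβ0 hρ1
      calc ρ⁻¹ * ‖G x - G y‖ ≤ e * (α * (|ρ - r| + ‖m - n‖)) := by
            apply mul_le_mul hρi h1 (norm_nonneg _) (by positivity)
        _ = α * e * (|ρ - r| + ‖m - n‖) := by ring
    · rw [norm_smul, Real.norm_eq_abs]
      exact mul_le_mul hinv h2 (norm_nonneg _) (by positivity)
  -- conclude by algebra
  set A := ‖ρ⁻¹ • G x - r⁻¹ • G y‖ with hAdef
  have hA0 : 0 ≤ A := norm_nonneg _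
  set a := |ρ - r| with ha
  set b := ‖m - n‖ with hb
  set t := ‖n‖ with ht
  have ha0 : 0 ≤ a := abs_nonneg _
  have hb0 : 0 ≤ b := norm_nonneg _
  have ht0 : 0 ≤ t := norm_nonneg _
  have ha2 : a ^ 2 = (ρ - r) ^ 2 := sq_abs _
  have hA2 : A ^ 2 ≤ (α * e * (a + b) + e ^ 2 * a * (α * (e + t))) ^ 2 := by
    apply pow_le_pow_left₀ hA0 hA
  have hρe : ρ ≤ e := hρ2
  have hX0 : 0 ≤ α * e * (a + b) + e ^ 2 * a * (α * (e + t)) := by positivity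
  have hXY : α * e * (a + b) + e ^ 2 * a * (α * (e + t))
      ≤ α * e ^ 3 * (2 * a + b + a * t) := by
    nlinarith [mul_nonneg hα (mul_nonneg ha0 (by nlinarith : (0:ℝ) ≤ e ^ 3 - e)),
      mul_nonneg hα (mul_nonneg hb0 (by nlinarith : (0:ℝ) ≤ e ^ 3 - e)),
      mul_nonneg hα (mul_nonneg (mul_nonneg ha0 ht0) (by nlinarith : (0:ℝ) ≤ e ^ 3 - e ^ 2))]
  have hT0 : 0 ≤ a ^ 2 * (1 + t ^ 2) + b ^ 2 := by positivity
  have hS : (2 * a + b + a * t) ^ 2 ≤ 12 * (a ^ 2 * (1 + t ^ 2) + b ^ 2) := by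
    nlinarith [sq_nonneg (2 * a - b), sq_nonneg (2 * a - a * t), sq_nonneg (b - a * t),
      sq_nonneg a, sq_nonneg (a * t), sq_nonneg b]
  have hρe : ρ ≤ e := hρ2
  calc ρ * A ^ 2 ≤ e * (α * e * (a + b) + e ^ 2 * a * (α * (e + t))) ^ 2 := by
        apply mul_le_mul hρe hA2 (by positivity) (by linarith)
    _ ≤ e * (α * e ^ 3 * (2 * a + b + a * t)) ^ 2 := by
        have := pow_le_pow_left₀ hX0 hXY 2
        nlinarith [this]
    _ = α ^ 2 * e ^ 7 * (2 * a + b + a * t) ^ 2 := by ring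
    _ ≤ (12 * (α + 1) ^ 2 * e ^ 7 + 1) * (a ^ 2 * (1 + t ^ 2) + b ^ 2) := by
        nlinarith [mul_le_mul_of_nonneg_left hS (by positivity : (0:ℝ) ≤ α ^ 2 * e ^ 7),
          mul_nonneg (mul_nonneg (by positivity : (0:ℝ) ≤ 2 * α + 1)
            (by positivity : (0:ℝ) ≤ e ^ 7)) hT0, hT0]
    _ = (12 * (α + 1) ^ 2 * e ^ 7 + 1) * ((ρ - r) ^ 2 * (1 + ‖n‖ ^ 2) + ‖m - n‖ ^ 2) := by
        rw [ha2]
end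

section
/- Let X be a compact metric space equipped with its Borel σ-algebra and let V be a finite Borel measure on X. Let (f_n) and (g_n) be sequences of V-integrable real-valued functions on X with |f_n| ≤ g_n V-almost everywhere for every n. Let μ be a finite signed Borel measure and λ a finite Borel measure on X such that for every continuous function φ : X → ℝ one has ∫ φ f_n dV → ∫ φ dμ and ∫ φ g_n dV → ∫ φ dλ as n → ∞. Then the total variation measure |μ| of μ satisfies |μ|(A) ≤ λ(A) for every Borel set A ⊆ X. -/
open MeasureTheory Filter

lemma aux_meas_le_integral {X : Type*} [MeasurableSpace X] (ρ : Measure X)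
    [IsFiniteMeasure ρ] {φ : X → ℝ} (hint : Integrable φ ρ) (h0 : ∀ x, 0 ≤ φ x)
    {K : Set X} (hK : MeasurableSet K) (h1 : ∀ x ∈ K, φ x = 1) :
    (ρ K).toReal ≤ ∫ x, φ x ∂ρ := by
  rw [← measureReal_def, ← integral_indicator_one hK]
  refine integral_mono ((integrable_indicator_iff hK).2
    (integrableOn_const (measure_ne_top _ _))) hint fun x => ?_
  by_cases hx : x ∈ K
  · simp [Set.indicator_of_mem hx, h1 x hx]
  · simp [Set.indicator_of_notMem hx, h0 x]

lemma aux_integral_le_meas {X : Type*} [MeasurableSpace X] (ρ : Measure X)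
    [IsFiniteMeasure ρ] {φ : X → ℝ} (hint : Integrable φ ρ) (h1 : ∀ x, φ x ≤ 1)
    {U : Set X} (hU : MeasurableSet U) (hsupp : ∀ x ∉ U, φ x = 0) :
    ∫ x, φ x ∂ρ ≤ (ρ U).toReal := by
  rw [← measureReal_def, ← integral_indicator_one hU]
  refine integral_mono hint ((integrable_indicator_iff hU).2
    (integrableOn_const (measure_ne_top _ _))) fun x => ?_
  by_cases hx : x ∈ U
  · simp [Set.indicator_of_mem hx, h1 x]
  · simp [Set.indicator_of_notMem hx, hsupp x hx]

lemma aux_toReal_lt_add {a b : ENNReal} {δ : ℝ} (hb : b ≠ ⊤)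
    (h : a < b + ENNReal.ofReal δ) (hδ : 0 ≤ δ) : a.toReal ≤ b.toReal + δ := by
  have := ENNReal.toReal_mono (ENNReal.add_ne_top.2 ⟨hb, ENNReal.ofReal_ne_top⟩) h.le
  rwa [ENNReal.toReal_add hb ENNReal.ofReal_ne_top, ENNReal.toReal_ofReal hδ] at this

/-- Comparison of weak* limits of dominated sequences. Let `X` be a
compact metric space, `V` a finite Borel measure on `X`, `(f_n)`, `(g_n)` `V`-integrable
with `|f_n| ≤ g_n` `V`-a.e. Suppose the signed measure `μ` and the finite measure `λ`
satisfy `∫ φ f_n dV → ∫ φ dμ` and `∫ φ g_n dV → ∫ φ dλ` for every continuous `φ`.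
Then `|μ|(A) ≤ λ(A)` for every Borel set `A`, where `|μ|` is the total variation of `μ`. -/
theorem defect_measure_domination
    {X : Type*} [MetricSpace X] [CompactSpace X] [MeasurableSpace X] [BorelSpace X]
    (V : Measure X) [IsFiniteMeasure V]
    (f g : ℕ → X → ℝ)
    (hf_int : ∀ n, Integrable (f n) V) (hg_int : ∀ n, Integrable (g n) V)
    (hdom : ∀ n, ∀ᵐ x ∂V, |f n x| ≤ g n x)
    (μ : SignedMeasure X) (lam : Measure X) [IsFiniteMeasure lam]
    (hμ : ∀ φ : X → ℝ, Continuous φ →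
      Tendsto (fun n => ∫ x, φ x * f n x ∂V) atTop
        (nhds ((∫ x, φ x ∂μ.toJordanDecomposition.posPart)
          - ∫ x, φ x ∂μ.toJordanDecomposition.negPart)))
    (hlam : ∀ φ : X → ℝ, Continuous φ →
      Tendsto (fun n => ∫ x, φ x * g n x ∂V) atTop (nhds (∫ x, φ x ∂lam))) :
    ∀ A : Set X, MeasurableSet A → μ.totalVariation A ≤ lam A := by
  intro A hA
  set μp := μ.toJordanDecomposition.posPart with hμpdef
  set μn := μ.toJordanDecomposition.negPart with hμndef
  have cont_int : ∀ (φ : X → ℝ), Continuous φ → ∀ (ρ : Measure X), IsFiniteMeasure ρ →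
      Integrable φ ρ := by
    intro φ hφ ρ hρ
    exact hφ.integrable_of_hasCompactSupport ((isClosed_tsupport φ).isCompact)
  have bdd : ∀ φ : X → ℝ, Continuous φ → ∃ C, ∀ x, ‖φ x‖ ≤ C := by
    intro φ hφ
    rcases (isCompact_range hφ.norm).bddAbove with ⟨C, hC⟩
    exact ⟨C, fun x => hC ⟨x, rfl⟩⟩
  have key : ∀ φ : X → ℝ, Continuous φ →
      |(∫ x, φ x ∂μp) - ∫ x, φ x ∂μn| ≤ ∫ x, |φ x| ∂lam := by
    intro φ hφ
    refine le_of_tendsto_of_tendsto' ((hμ φ hφ).abs) (hlam _ hφ.abs) fun n => ?_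
    rcases bdd φ hφ with ⟨C, hC⟩
    have i1 : Integrable (fun x => φ x * f n x) V :=
      (hf_int n).bdd_mul hφ.aestronglyMeasurable (Eventually.of_forall hC)
    have i2 : Integrable (fun x => |φ x| * g n x) V :=
      (hg_int n).bdd_mul hφ.abs.aestronglyMeasurable
        (Eventually.of_forall fun x => by simpa [Real.norm_eq_abs, abs_abs] using hC x)
    calc |∫ x, φ x * f n x ∂V| ≤ ∫ x, |φ x| * |f n x| ∂V := by
          simpa [Real.norm_eq_abs, abs_mul] using norm_integral_le_integral_norm (μ := V)
            (fun x => φ x * f n x)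
      _ ≤ ∫ x, |φ x| * g n x ∂V := by
          refine integral_mono_ae (by simpa [abs_mul] using i1.abs) i2 ?_
          filter_upwards [hdom n] with x hx
          exact mul_le_mul_of_nonneg_left hx (abs_nonneg _)
  obtain ⟨S, hSm, hpS, hnSc⟩ := μ.toJordanDecomposition.mutuallySingular
  have main : ∀ δ : ℝ, 0 < δ →
      (μp A).toReal + (μn A).toReal ≤ (lam A).toReal + 5 * δ := by
    intro δ hδ
    have hδ' : (ENNReal.ofReal δ) ≠ 0 := by
      simp [ENNReal.ofReal_eq_zero, not_le, hδ]
    obtain ⟨F₁, hF₁sub, hF₁closed, hF₁⟩ :=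
      (hA.inter hSm.compl).exists_isClosed_lt_add (μ := μp) (measure_ne_top _ _) hδ'
    obtain ⟨F₂, hF₂sub, hF₂closed, hF₂⟩ :=
      (hA.inter hSm).exists_isClosed_lt_add (μ := μn) (measure_ne_top _ _) hδ'
    have hK₁ : IsCompact F₁ := hF₁closed.isCompact
    have hK₂ : IsCompact F₂ := hF₂closed.isCompact
    have hdisj : Disjoint F₁ F₂ :=
      Set.disjoint_left.2 fun x hx1 hx2 => (hF₁sub hx1).2 (hF₂sub hx2).2
    obtain ⟨W₁, hW₁sub, hW₁open, hW₁⟩ :=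
      F₁.exists_isOpen_lt_add (μ := μn) (measure_ne_top _ _) hδ'
    obtain ⟨W₂, hW₂sub, hW₂open, hW₂⟩ :=
      F₂.exists_isOpen_lt_add (μ := μp) (measure_ne_top _ _) hδ'
    obtain ⟨W, hWsub, hWopen, hW⟩ :=
      (F₁ ∪ F₂).exists_isOpen_lt_add (μ := lam) (measure_ne_top _ _) hδ'
    obtain ⟨O₁, O₂, hO₁, hO₂, hFO₁, hFO₂, hOdisj⟩ :=
      SeparatedNhds.of_isCompact_isCompact hK₁ hK₂ hdisj
    set U₁ := O₁ ∩ (W₁ ∩ W) with hU₁def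
    set U₂ := O₂ ∩ (W₂ ∩ W) with hU₂def
    have hU₁open : IsOpen U₁ := hO₁.inter (hW₁open.inter hWopen)
    have hU₂open : IsOpen U₂ := hO₂.inter (hW₂open.inter hWopen)
    have hFU₁ : F₁ ⊆ U₁ := Set.subset_inter hFO₁
      (Set.subset_inter hW₁sub (Set.subset_union_left.trans hWsub))
    have hFU₂ : F₂ ⊆ U₂ := Set.subset_inter hFO₂
      (Set.subset_inter hW₂sub (Set.subset_union_right.trans hWsub))
    have hU₁₂ : Disjoint U₁ U₂ := hOdisj.mono Set.inter_subset_left Set.inter_subset_left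
    obtain ⟨φ₁, hφ₁K, hφ₁0, _, hφ₁mem⟩ :=
      exists_continuous_one_zero_of_isCompact hK₁ (isClosed_compl_iff.2 hU₁open)
        (Set.disjoint_left.2 fun x hx hxc => hxc (hFU₁ hx))
    obtain ⟨φ₂, hφ₂K, hφ₂0, _, hφ₂mem⟩ :=
      exists_continuous_one_zero_of_isCompact hK₂ (isClosed_compl_iff.2 hU₂open)
        (Set.disjoint_left.2 fun x hx hxc => hxc (hFU₂ hx))
    have hφ₁c : Continuous φ₁ := φ₁.continuous
    have hφ₂c : Continuous φ₂ := φ₂.continuous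
    have int_p1 : (μp F₁).toReal ≤ ∫ x, φ₁ x ∂μp :=
      aux_meas_le_integral μp (cont_int _ hφ₁c μp inferInstance)
        (fun x => (hφ₁mem x).1) hF₁closed.measurableSet (fun x hx => hφ₁K hx)
    have int_n2 : (μn F₂).toReal ≤ ∫ x, φ₂ x ∂μn :=
      aux_meas_le_integral μn (cont_int _ hφ₂c μn inferInstance)
        (fun x => (hφ₂mem x).1) hF₂closed.measurableSet (fun x hx => hφ₂K hx)
    have int_p2 : ∫ x, φ₂ x ∂μp ≤ (μp U₂).toReal :=
      aux_integral_le_meas μp (cont_int _ hφ₂c μp inferInstance)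
        (fun x => (hφ₂mem x).2) hU₂open.measurableSet (fun x hx => hφ₂0 hx)
    have int_n1 : ∫ x, φ₁ x ∂μn ≤ (μn U₁).toReal :=
      aux_integral_le_meas μn (cont_int _ hφ₁c μn inferInstance)
        (fun x => (hφ₁mem x).2) hU₁open.measurableSet (fun x hx => hφ₁0 hx)
    have int_l1 : ∫ x, φ₁ x ∂lam ≤ (lam U₁).toReal :=
      aux_integral_le_meas lam (cont_int _ hφ₁c lam inferInstance)
        (fun x => (hφ₁mem x).2) hU₁open.measurableSet (fun x hx => hφ₁0 hx)
    have int_l2 : ∫ x, φ₂ x ∂lam ≤ (lam U₂).toReal :=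
      aux_integral_le_meas lam (cont_int _ hφ₂c lam inferInstance)
        (fun x => (hφ₂mem x).2) hU₂open.measurableSet (fun x hx => hφ₂0 hx)
    -- key inequality for φ₁ - φ₂
    have hkey := key (fun x => φ₁ x - φ₂ x) (hφ₁c.sub hφ₂c)
    rw [integral_sub (cont_int _ hφ₁c μp inferInstance) (cont_int _ hφ₂c μp inferInstance),
      integral_sub (cont_int _ hφ₁c μn inferInstance) (cont_int _ hφ₂c μn inferInstance)] at hkey
    have habs_le : ∫ x, |φ₁ x - φ₂ x| ∂lam ≤ (∫ x, φ₁ x ∂lam) + ∫ x, φ₂ x ∂lam := by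
      rw [← integral_add (cont_int _ hφ₁c lam inferInstance) (cont_int _ hφ₂c lam inferInstance)]
      refine integral_mono ((cont_int _ (hφ₁c.sub hφ₂c) lam inferInstance).abs)
        (cont_int _ (hφ₁c.add hφ₂c) lam inferInstance) fun x => ?_
      exact (abs_sub (φ₁ x) (φ₂ x)).trans (by
        simp [abs_of_nonneg (hφ₁mem x).1, abs_of_nonneg (hφ₂mem x).1])
    -- measure comparisons
    have hμpA : (μp A).toReal ≤ (μp F₁).toReal + δ := by
      refine aux_toReal_lt_add (measure_ne_top _ _) (lt_of_le_of_lt ?_ hF₁) hδ.le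
      calc μp A ≤ μp (A ∩ Sᶜ) + μp (A ∩ S) := by
            rw [← measure_inter_add_diff A hSm.compl]
            exact add_le_add_right (measure_mono (by intro x hx; exact ⟨hx.1, by simpa using hx.2⟩)) _
        _ ≤ μp (A ∩ Sᶜ) + 0 := add_le_add_right (le_trans (measure_mono Set.inter_subset_right) hpS.le) _
        _ = μp (A ∩ Sᶜ) := add_zero _
    have hμnA : (μn A).toReal ≤ (μn F₂).toReal + δ := by
      refine aux_toReal_lt_add (measure_ne_top _ _) (lt_of_le_of_lt ?_ hF₂) hδ.le
      calc μn A ≤ μn (A ∩ S) + μn (A ∩ Sᶜ) := by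
            rw [← measure_inter_add_diff A hSm]
            exact add_le_add_right (measure_mono (by intro x hx; exact ⟨hx.1, hx.2⟩)) _
        _ ≤ μn (A ∩ S) + 0 := add_le_add_right (le_trans (measure_mono Set.inter_subset_right) hnSc.le) _
        _ = μn (A ∩ S) := add_zero _
    have hμnU₁ : (μn U₁).toReal ≤ δ := by
      have h1 : μn F₁ = 0 := le_antisymm (le_trans (measure_mono
        (fun x hx => (hF₁sub hx).2)) hnSc.le) zero_le
      have := aux_toReal_lt_add (a := μn U₁) (b := μn F₁) (measure_ne_top _ _)
        (lt_of_le_of_lt (measure_mono (Set.inter_subset_right.trans Set.inter_subset_left)) hW₁) hδ.le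
      simpa [h1] using this
    have hμpU₂ : (μp U₂).toReal ≤ δ := by
      have h1 : μp F₂ = 0 := le_antisymm (le_trans (measure_mono
        (fun x hx => (hF₂sub hx).2)) hpS.le) zero_le
      have := aux_toReal_lt_add (a := μp U₂) (b := μp F₂) (measure_ne_top _ _)
        (lt_of_le_of_lt (measure_mono (Set.inter_subset_right.trans Set.inter_subset_left)) hW₂) hδ.le
      simpa [h1] using this
    have hlamU : (lam U₁).toReal + (lam U₂).toReal ≤ (lam A).toReal + δ := by
      have hsum : lam U₁ + lam U₂ = lam (U₁ ∪ U₂) :=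
        (measure_union hU₁₂ hU₂open.measurableSet).symm
      have hle : lam (U₁ ∪ U₂) ≤ lam W := measure_mono (Set.union_subset
        (Set.inter_subset_right.trans Set.inter_subset_right)
        (Set.inter_subset_right.trans Set.inter_subset_right))
      have hWle : (lam W).toReal ≤ (lam (F₁ ∪ F₂)).toReal + δ :=
        aux_toReal_lt_add (measure_ne_top _ _) hW hδ.le
      have hFA : (lam (F₁ ∪ F₂)).toReal ≤ (lam A).toReal := by
        refine ENNReal.toReal_mono (measure_ne_top _ _) (measure_mono (Set.union_subset
          (fun x hx => (hF₁sub hx).1) (fun x hx => (hF₂sub hx).1)))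
      have h2 : (lam U₁).toReal + (lam U₂).toReal ≤ (lam W).toReal := by
        rw [← ENNReal.toReal_add (measure_ne_top _ _) (measure_ne_top _ _), hsum]
        exact ENNReal.toReal_mono (measure_ne_top _ _) hle
      linarith
    have habs := le_abs_self (((∫ x, φ₁ x ∂μp) - ∫ x, φ₂ x ∂μp)
      - ((∫ x, φ₁ x ∂μn) - ∫ x, φ₂ x ∂μn))
    linarith
  rw [SignedMeasure.totalVariation, Measure.add_apply]
  have h1 : μp A + μn A ≠ ⊤ :=
    ENNReal.add_ne_top.2 ⟨measure_ne_top _ _, measure_ne_top _ _⟩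
  rw [← ENNReal.toReal_le_toReal h1 (measure_ne_top _ _),
    ENNReal.toReal_add (measure_ne_top _ _) (measure_ne_top _ _)]
  refine le_of_forall_pos_le_add fun ε hε => ?_
  have := main (ε / 5) (by positivity)
  linarith
end
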